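/- With the setup of the Lagrange deformation (q_x = -p_y/W, q_y = p_x/W, W = √(1+p_x²+p_y²), f = (cosh λ)p, g = (sinh λ)q), the induced metric coefficients of the graph of (f,g) satisfy (E/ω, F/ω, G/ω) = ((1+p_x²)/W, p_x p_y/W, (1+p_y²)/W), independent of λ. In particular the conformally normalized metric (1/ω)·(E dx² + 2F dxdy + G dy²) is invariant under λ. -/

import Mathlib

lemma fd_const_mul (c : ℝ) (q : ℝ × ℝ → ℝ) (v u : ℝ × ℝ) :
    fderiv ℝ (fun w => c * q w) v u = c * fderiv ℝ q v u := by
  by_cases hq : DifferentiableAt ℝ q v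
  · rw [fderiv_const_mul hq]; simp
  · by_cases hc : c = 0
    · simp [hc]
    · have hnd : ¬ DifferentiableAt ℝ (fun w => c * q w) v := by
        intro h
        have h2 := h.const_mul c⁻¹
        have : (fun w => c⁻¹ * (c * q w)) = q := by
          funext w; field_simp
        rw [this] at h2
        exact hq h2
      rw [fderiv_zero_of_not_differentiableAt hnd, fderiv_zero_of_not_differentiableAt hq]
      simp

noncomputable def pdx {E : Type*} [NormedAddCommGroup E] [NormedSpace ℝ E]
    (f : ℝ × ℝ → E) : ℝ × ℝ → E := fun p => fderiv ℝ f p (1, 0)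

noncomputable def pdy {E : Type*} [NormedAddCommGroup E] [NormedSpace ℝ E]
    (f : ℝ × ℝ → E) : ℝ × ℝ → E := fun p => fderiv ℝ f p (0, 1)

noncomputable def Ec (f g : ℝ × ℝ → ℝ) : ℝ × ℝ → ℝ :=
  fun p => 1 + (pdx f p) ^ 2 + (pdx g p) ^ 2

noncomputable def Fc (f g : ℝ × ℝ → ℝ) : ℝ × ℝ → ℝ :=
  fun p => pdx f p * pdy f p + pdx g p * pdy g p

noncomputable def Gc (f g : ℝ × ℝ → ℝ) : ℝ × ℝ → ℝ :=
  fun p => 1 + (pdy f p) ^ 2 + (pdy g p) ^ 2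

noncomputable def om (f g : ℝ × ℝ → ℝ) : ℝ × ℝ → ℝ :=
  fun p => Real.sqrt (Ec f g p * Gc f g p - (Fc f g p) ^ 2)

noncomputable def Wg (p : ℝ × ℝ → ℝ) : ℝ × ℝ → ℝ :=
  fun v => Real.sqrt (1 + (pdx p v) ^ 2 + (pdy p v) ^ 2)

theorem stmt_9 (Ω : Set (ℝ × ℝ)) (hΩ : IsOpen Ω) (p q : ℝ × ℝ → ℝ)
    (hp : ContDiffOn ℝ 2 p Ω)
    (hLag : ∀ v ∈ Ω, pdx q v = -pdy p v / Wg p v ∧ pdy q v = pdx p v / Wg p v)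
    (lam : ℝ) (f g : ℝ × ℝ → ℝ)
    (hfdef : f = fun v => Real.cosh lam * p v) (hgdef : g = fun v => Real.sinh lam * q v)
    (ω : ℝ × ℝ → ℝ)
    (hω : ∀ v, ω v = (Real.cosh lam) ^ 2 * Wg p v - (Real.sinh lam) ^ 2 / Wg p v) :
    ∀ v ∈ Ω,
      Ec f g v / ω v = (1 + (pdx p v) ^ 2) / Wg p v ∧
      Fc f g v / ω v = pdx p v * pdy p v / Wg p v ∧
      Gc f g v / ω v = (1 + (pdy p v) ^ 2) / Wg p v := by
  intro v hv
  obtain ⟨hqx, hqy⟩ := hLag v hv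
  set a := pdx p v with ha
  set b := pdy p v with hb
  set c := Real.cosh lam with hc
  set s := Real.sinh lam with hs
  set W := Wg p v with hWdef
  have hfx : pdx f v = c * a := by rw [hfdef]; exact fd_const_mul c p v (1, 0)
  have hfy : pdy f v = c * b := by rw [hfdef]; exact fd_const_mul c p v (0, 1)
  have hgx : pdx g v = s * (-b / W) := by
    rw [hgdef]
    have := fd_const_mul s q v (1, 0)
    rw [show fderiv ℝ q v (1, 0) = pdx q v from rfl, hqx] at this
    exact this
  have hgy : pdy g v = s * (a / W) := by
    rw [hgdef]
    have := fd_const_mul s q v (0, 1)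
    rw [show fderiv ℝ q v (0, 1) = pdy q v from rfl, hqy] at this
    exact this
  have hWpos : 0 < W := Real.sqrt_pos.2 (by positivity)
  have hW2 : W ^ 2 = 1 + a ^ 2 + b ^ 2 := Real.sq_sqrt (by positivity)
  have hcs : c ^ 2 = 1 + s ^ 2 := by
    have := Real.cosh_sq_sub_sinh_sq lam; rw [← hc, ← hs] at this; linarith
  have hωpos : 0 < ω v := by
    rw [hω v, ← hWdef]
    rw [sub_pos, div_lt_iff₀ hWpos]
    nlinarith [sq_nonneg s, sq_nonneg a, sq_nonneg b]
  have hωne := ne_of_gt hωpos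
  have hWne := ne_of_gt hWpos
  refine ⟨?_, ?_, ?_⟩
  · rw [div_eq_div_iff hωne hWne]
    simp only [Ec, hfx, hgx, hω v, ← hWdef]
    field_simp
    linear_combination (-s^2) * hW2 + (-W^2) * hcs
  · rw [div_eq_div_iff hωne hWne]
    simp only [Fc, hfx, hfy, hgx, hgy, hω v, ← hWdef]
    field_simp
    ring
  · rw [div_eq_div_iff hωne hWne]
    simp only [Gc, hfy, hgy, hω v, ← hWdef]
    field_simp
    linear_combination (-s^2) * hW2 + (-W^2) * hcs
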